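/- Let n ≥ 2 and let x ⋖ y be a cover relation in P_n^* between wire diagrams with S(x) = S(y), and suppose λ(x,y) = (i,j) with i < j (so the step is a nesting uncrossing of the crossing formed by wires i and j of x). Then π(y) = t ∘ π(x), where t is the transposition of {1,…,n} interchanging i and j, and inv(π(y)) = inv(π(x)) + 1. -/

import Mathlib

open Equiv Finset

/-- A candidate wire diagram: a permutation of the `2 n` endpoint positions. -/
abbrev WDperm (n : ℕ) := Equiv.Perm (Fin (2 * n))

/-- `σ` is a wire diagram on `n` wires: a fixed-point-free involution of the `2 n` positions. -/
def IsWD {n : ℕ} (σ : WDperm n) : Prop := (∀ x, σ (σ x) = x) ∧ ∀ x, σ x ≠ x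

instance IsWD.decPred {n : ℕ} : DecidablePred (@IsWD n) := fun σ => by
  unfold IsWD; infer_instance

/-- Positions `a < c` are first endpoints of a pair of crossing wires `{a, σ a}`, `{c, σ c}`,
i.e. `a < c < σ a < σ c`. -/
def IsCrossing {n : ℕ} (σ : WDperm n) (a c : Fin (2 * n)) : Prop :=
  a < c ∧ c < σ a ∧ σ a < σ c

instance IsCrossing.dec {n : ℕ} (σ : WDperm n) (a c : Fin (2 * n)) :
    Decidable (IsCrossing σ a c) := by unfold IsCrossing; infer_instance

/-- The number `c(σ)` of crossings of `σ`. -/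
def ncross {n : ℕ} (σ : WDperm n) : ℕ :=
  (Finset.univ.filter (fun p : Fin (2 * n) × Fin (2 * n) => IsCrossing σ p.1 p.2)).card

/-- The nesting uncrossing of the crossing `{a, σ a}, {c, σ c}` (with `a < c < σ a < σ c`):
replace the pairs `{a,b},{c,d}` by `{a,d},{b,c}` where `b = σ a`, `d = σ c`. -/
def nestU {n : ℕ} (σ : WDperm n) (a c : Fin (2 * n)) : WDperm n :=
  Equiv.swap (σ a) (σ c) * σ * Equiv.swap (σ a) (σ c)

/-- The disjoint uncrossing: replace the pairs `{a,b},{c,d}` by `{a,c},{b,d}`. -/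
def disjU {n : ℕ} (σ : WDperm n) (a c : Fin (2 * n)) : WDperm n :=
  Equiv.swap (σ a) c * σ * Equiv.swap (σ a) c

/-- `τ` is obtained from `σ` by a nesting uncrossing of some crossing of `σ`. -/
def IsNestStep {n : ℕ} (σ τ : WDperm n) : Prop := ∃ a c, IsCrossing σ a c ∧ τ = nestU σ a c

/-- `τ` is obtained from `σ` by a disjoint uncrossing of some crossing of `σ`. -/
def IsDisjStep {n : ℕ} (σ τ : WDperm n) : Prop := ∃ a c, IsCrossing σ a c ∧ τ = disjU σ a c

/-- `τ` is obtained from `σ` by an uncrossing step that decreases the crossing number by one. -/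
def UncCov {n : ℕ} (σ τ : WDperm n) : Prop :=
  (IsNestStep σ τ ∨ IsDisjStep σ τ) ∧ ncross τ + 1 = ncross σ

/-- The dual uncrossing poset `P_n^*`: wire diagrams together with a top element `none = 1̂`
(the adjoined element `0̂` of `P_n`). -/
abbrev PStar (n : ℕ) := Option {σ : WDperm n // IsWD σ}

/-- The covering relation of `P_n^*`. -/
def Cov {n : ℕ} : PStar n → PStar n → Prop
  | some σ, some τ => UncCov σ.1 τ.1
  | some σ, none => ncross σ.1 = 0
  | none, _ => False

/-- The partial order of `P_n^*`: reflexive-transitive closure of the covering relation. -/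
def ple {n : ℕ} : PStar n → PStar n → Prop := Relation.ReflTransGen Cov

/-- The (0-indexed) name `w(σ)(x)` of the wire through position `x`: the number of wires whose
first endpoint is strictly smaller than the first endpoint of the wire through `x`. -/
def word {n : ℕ} (σ : WDperm n) (x : Fin (2 * n)) : ℕ :=
  (Finset.univ.filter (fun a : Fin (2 * n) => a < σ a ∧ a < min x (σ x))).card

/-- The start set `S(σ)`: the set of first endpoints of wires of `σ`. -/
def startSet {n : ℕ} (σ : WDperm n) : Finset (Fin (2 * n)) :=
  Finset.univ.filter (fun a => a < σ a)

/-- The noncrossing pair set `N(σ)` (on 0-indexed wire names): `(i, j)` with `i < j` for each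
nested pair of wires `i < j`, and `(j, i)` for each disjoint pair of wires `i < j`. -/
def NPairs {n : ℕ} (σ : WDperm n) : Set (ℕ × ℕ) :=
  {p | ∃ a c : Fin (2 * n), a < σ a ∧ c < σ c ∧ a < c ∧
        ((σ c < σ a ∧ p = (word σ a, word σ c)) ∨ (σ a < c ∧ p = (word σ c, word σ a)))}

/-- Lexicographic comparison of finsets via their increasing enumerations. -/
def finsetLexLE {m : ℕ} (A B : Finset (Fin m)) : Prop :=
  A = B ∨ List.Lex (· < ·) (A.sort (· ≤ ·)) (B.sort (· ≤ ·))

/-- Labels of the edge labeling: ordered pairs of (0-indexed) wire names, and a label `L`. -/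
inductive Lbl where
  | pair : ℕ → ℕ → Lbl
  | L : Lbl
deriving DecidableEq

/-- The total order `<λ` on labels. -/
def lblLT : Lbl → Lbl → Prop
  | .pair i j, .pair i' j' =>
      if i < j then (if i' < j' then i < i' ∨ (i = i' ∧ j < j') else True)
      else (if i' < j' then False else (j' < j ∨ (j = j' ∧ i' < i)))
  | .pair i j, .L => i < j
  | .L, .pair r s => s < r
  | .L, .L => False

/-- `≤λ` on labels. -/
def lblLE (p q : Lbl) : Prop := p = q ∨ lblLT p q

/-- The sorted list of positions where `σ` and `τ` differ. -/
def diffList {n : ℕ} (σ τ : WDperm n) : List (Fin (2 * n)) :=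
  (Finset.univ.filter (fun x => σ x ≠ τ x)).sort (· ≤ ·)

/-- The edge labeling `λ` of `P_n^*`: an uncrossing of the crossing formed by wires `k < m`
of the lower diagram gets label `(k, m)` if it is the nesting uncrossing and `(m, k)` if it is
the disjoint uncrossing; covers of the top element `1̂ = none` get the label `L`. -/
def lbl {n : ℕ} : PStar n → PStar n → Lbl
  | some σ, some τ =>
      match (diffList σ.1 τ.1)[0]?, (diffList σ.1 τ.1)[1]? with
      | some a, some c =>
          if τ.1 a = σ.1 c then Lbl.pair (word σ.1 a) (word σ.1 c)
          else Lbl.pair (word σ.1 c) (word σ.1 a)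
      | _, _ => Lbl.L
  | _, _ => Lbl.L

/-- `c` is a saturated chain from `u` to `v` in `P_n^*`. -/
def SatChain {n : ℕ} (c : List (PStar n)) (u v : PStar n) : Prop :=
  c.Chain' Cov ∧ c.head? = some u ∧ c.getLast? = some v

/-- The label sequence of a saturated chain. -/
def chainLabels {n : ℕ} (c : List (PStar n)) : List Lbl := c.zipWith lbl c.tail

/-- Lexicographic order on pairs of labels. -/
def pairLexLT (p q : Lbl × Lbl) : Prop := lblLT p.1 q.1 ∨ (p.1 = q.1 ∧ lblLT p.2 q.2)

/-- `x ⋖ y ⋖ z` is a topological ascent: its label pair is lexicographically strictly smaller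
than the label pair of every other saturated chain from `x` to `z`. -/
def TopAscent {n : ℕ} (x y z : PStar n) : Prop :=
  Cov x y ∧ Cov y z ∧ ∀ y' : PStar n, Cov x y' → Cov y' z → y' ≠ y →
    pairLexLT (lbl x y, lbl y z) (lbl x y', lbl y' z)

/-- `x ⋖ y ⋖ z` is a topological descent: a length-two chain that is not a topological ascent. -/
def TopDescent {n : ℕ} (x y z : PStar n) : Prop := Cov x y ∧ Cov y z ∧ ¬ TopAscent x y z

/-- Every length-two subchain of `c` is a topological ascent. -/
def AllTopAscents {n : ℕ} (c : List (PStar n)) : Prop :=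
  ∀ x y z : PStar n, [x, y, z] <:+: c → TopAscent x y z

/-- The number of inversions of a permutation. -/
def numInv {n : ℕ} (π : Equiv.Perm (Fin n)) : ℕ :=
  (Finset.univ.filter (fun p : Fin n × Fin n => p.1 < p.2 ∧ π p.2 < π p.1)).card

/-- One step of the Bruhat order: left multiplication by a transposition raising `inv` by one. -/
def BruhatStep {n : ℕ} (u v : Equiv.Perm (Fin n)) : Prop :=
  (∃ a b : Fin n, a ≠ b ∧ v = Equiv.swap a b * u) ∧ numInv v = numInv u + 1

/-- The Bruhat order on `S_n`. -/
def BruhatLE {n : ℕ} : Equiv.Perm (Fin n) → Equiv.Perm (Fin n) → Prop :=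
  Relation.ReflTransGen BruhatStep

/-- The set of second endpoints of wires of `σ`. -/
def secondEnds {n : ℕ} (σ : WDperm n) : Finset (Fin (2 * n)) :=
  Finset.univ.filter (fun b => σ b < b)

/-- The wire name at the `t`-th (0-indexed) second endpoint. -/
def piVal {n : ℕ} (σ : WDperm n) (t : ℕ) : ℕ :=
  (((secondEnds σ).sort (· ≤ ·))[t]?).elim 0 (word σ)

open Classical in
/-- The permutation `π(σ) ∈ S_n` reading the wire names at the second endpoints of `σ` in
increasing order of position. -/
noncomputable def piPerm {n : ℕ} (σ : WDperm n) : Equiv.Perm (Fin n) :=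
  if h : Function.Bijective (fun t : Fin n =>
      if ht : piVal σ (t : ℕ) < n then (⟨piVal σ (t : ℕ), ht⟩ : Fin n) else t)
  then Equiv.ofBijective _ h else 1

/-- Apply to the crossing at `(a, c)` the nesting (`nest = true`) or disjoint (`nest = false`)
uncrossing. -/
def uncrossAt {n : ℕ} (σ : WDperm n) (a c : Fin (2 * n)) (nest : Bool) : WDperm n :=
  if nest then nestU σ a c else disjU σ a c


lemma ptwise {α : Type*} [DecidableEq α] (a c : α) (hac : a ≠ c) (F : α → α → ℕ) (p q : α) :
    F p q + ((if p = a then (if q = a then F a a else 0) + (if q = c then F a c else 0) else 0)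
      + (if p = c then (if q = a then F c a else 0) + (if q = c then F c c else 0) else 0))
    = (if p ≠ a ∧ p ≠ c ∧ q ≠ a ∧ q ≠ c then F p q else 0)
      + ((if p = a then F p q else 0) + (if p = c then F p q else 0)
        + (if q = a then F p q else 0) + (if q = c then F p q else 0)) := by
  split_ifs <;> simp_all <;> omega

lemma sumIE {α : Type*} [Fintype α] [DecidableEq α] (a c : α) (hac : a ≠ c)
    (f g : α → α → ℕ) (bad : α → ℕ)
    (h0 : ∀ p q, p ≠ a → p ≠ c → q ≠ a → q ≠ c → f p q = g p q)
    (h1 : ∀ q, f a q + f c q + f q a + f q c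
        = g a q + g c q + g q a + g q c + 2 * bad q
          + (if q = a then 1 else 0) + (if q = c then 1 else 0))
    (h2 : f a a + f a c + f c a + f c c = 1)
    (h3 : g a a + g a c + g c a + g c c = 0) :
    ∑ p, ∑ q, f p q = (∑ p, ∑ q, g p q) + 1 + 2 * ∑ t, bad t := by
  have key : ∀ F : α → α → ℕ,
      (∑ p, ∑ q, F p q) + (F a a + F a c + F c a + F c c) =
      (∑ p, ∑ q, if p ≠ a ∧ p ≠ c ∧ q ≠ a ∧ q ≠ c then F p q else 0)
        + (∑ q, (F a q + F c q + F q a + F q c)) := by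
    intro F
    have e1 : ∀ p q, F p q + ((if p = a then (if q = a then F a a else 0) + (if q = c then F a c else 0) else 0)
      + (if p = c then (if q = a then F c a else 0) + (if q = c then F c c else 0) else 0))
      = (if p ≠ a ∧ p ≠ c ∧ q ≠ a ∧ q ≠ c then F p q else 0)
      + ((if p = a then F p q else 0) + (if p = c then F p q else 0)
        + (if q = a then F p q else 0) + (if q = c then F p q else 0)) := ptwise a c hac F
    have := Finset.sum_congr rfl (fun p (_ : p ∈ (univ : Finset α)) =>
      Finset.sum_congr rfl (fun q (_ : q ∈ (univ : Finset α)) => e1 p q))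
    simp only [Finset.sum_add_distrib, Finset.sum_ite_irrel, Finset.sum_const_zero,
      Finset.sum_ite_eq', Finset.mem_univ, if_true] at this
    -- now massage
    rw [show (∑ q, (F a q + F c q + F q a + F q c)) = (∑ q, F a q) + (∑ q, F c q) + (∑ q, F q a) + (∑ q, F q c) by
      simp [Finset.sum_add_distrib]]
    omega
  have kf := key f
  have kg := key g
  rw [h2] at kf
  rw [h3] at kg
  have hT : (∑ q, (f a q + f c q + f q a + f q c))
      = (∑ q, (g a q + g c q + g q a + g q c)) + 2 * (∑ t, bad t) + 2 := by
    have := Finset.sum_congr rfl (fun q (_ : q ∈ (univ : Finset α)) => h1 q)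
    rw [this]
    simp [Finset.sum_add_distrib, Finset.mul_sum, hac.symm]
  have hS0 : (∑ p, ∑ q, if p ≠ a ∧ p ≠ c ∧ q ≠ a ∧ q ≠ c then f p q else 0)
      = (∑ p, ∑ q, if p ≠ a ∧ p ≠ c ∧ q ≠ a ∧ q ≠ c then g p q else 0) := by
    refine Finset.sum_congr rfl fun p _ => Finset.sum_congr rfl fun q _ => ?_
    split_ifs with h
    · exact h0 p q h.1 h.2.1 h.2.2.1 h.2.2.2
    · rfl
  omega

open Equiv

section Main

variable {n : ℕ}

lemma nestU_apply (σ : WDperm n) (a c z : Fin (2*n)) :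
    nestU σ a c z = Equiv.swap (σ a) (σ c) (σ (Equiv.swap (σ a) (σ c) z)) := rfl

variable {σ : WDperm n} {a c : Fin (2*n)}

namespace NestCtx

variable (hinv : ∀ z, σ (σ z) = z) (hcr : IsCrossing σ a c)

section
include hcr

lemma hac : a < c := hcr.1
lemma hcb : c < σ a := hcr.2.1
lemma hbd : σ a < σ c := hcr.2.2

end

include hinv hcr

lemma tau_a : nestU σ a c a = σ c := by
  have h1 : a ≠ σ a := ne_of_lt (lt_trans hcr.1 hcr.2.1)
  have h2 : a ≠ σ c := ne_of_lt (lt_trans (lt_trans hcr.1 hcr.2.1) hcr.2.2)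
  rw [nestU_apply, Equiv.swap_apply_of_ne_of_ne h1 h2, Equiv.swap_apply_left]

lemma tau_c : nestU σ a c c = σ a := by
  have h1 : c ≠ σ a := ne_of_lt hcr.2.1
  have h2 : c ≠ σ c := ne_of_lt (lt_trans hcr.2.1 hcr.2.2)
  rw [nestU_apply, Equiv.swap_apply_of_ne_of_ne h1 h2, Equiv.swap_apply_right]

lemma tau_b : nestU σ a c (σ a) = c := by
  have h1 : c ≠ σ a := ne_of_lt hcr.2.1
  have h2 : c ≠ σ c := ne_of_lt (lt_trans hcr.2.1 hcr.2.2)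
  rw [nestU_apply, Equiv.swap_apply_left, hinv]
  exact Equiv.swap_apply_of_ne_of_ne h1 h2

lemma tau_d : nestU σ a c (σ c) = a := by
  have h1 : a ≠ σ a := ne_of_lt (lt_trans hcr.1 hcr.2.1)
  have h2 : a ≠ σ c := ne_of_lt (lt_trans (lt_trans hcr.1 hcr.2.1) hcr.2.2)
  rw [nestU_apply, Equiv.swap_apply_right, hinv]
  exact Equiv.swap_apply_of_ne_of_ne h1 h2

lemma tau_other {z : Fin (2*n)} (h1 : z ≠ a) (h2 : z ≠ σ a) (h3 : z ≠ c) (h4 : z ≠ σ c) :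
    nestU σ a c z = σ z := by
  rw [nestU_apply, Equiv.swap_apply_of_ne_of_ne h2 h4,
    Equiv.swap_apply_of_ne_of_ne (fun h => h1 (by rw [← hinv z, h, hinv]))
      (fun h => h3 (by rw [← hinv z, h, hinv]))]


omit hinv hcr in
lemma ncross_sum (ρ : WDperm n) :
    ncross ρ = ∑ p, ∑ q, (if IsCrossing ρ p q then 1 else 0) := by
  rw [ncross, Finset.card_filter]
  exact Fintype.sum_prod_type _

set_option maxHeartbeats 4000000 in
lemma ncross_eq :
    ncross σ = ncross (nestU σ a c) + 1
      + 2 * ((univ.filter (fun z : Fin (2*n) => a < z ∧ z < c ∧ σ a < σ z ∧ σ z < σ c)).card) := by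
  have ta := tau_a hinv hcr
  have tb := tau_b hinv hcr
  have tc := tau_c hinv hcr
  have td := tau_d hinv hcr
  have h1' : (a:ℕ) < c := hcr.1
  have h2' : (c:ℕ) < (σ a : Fin (2*n)) := hcr.2.1
  have h3' : ((σ a : Fin (2*n)) : ℕ) < (σ c : Fin (2*n)) := hcr.2.2
  set τ := nestU σ a c with hτdef
  rw [ncross_sum σ, ncross_sum τ, Finset.card_filter]
  refine sumIE a c (ne_of_lt hcr.1)
    (fun p q => if IsCrossing σ p q then 1 else 0)
    (fun p q => if IsCrossing τ p q then 1 else 0)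
    (fun z => if (a < z ∧ z < c ∧ σ a < σ z ∧ σ z < σ c) then 1 else 0)
    ?_ ?_ ?_ ?_
  · -- h0
    intro p q hpa hpc hqa hqc
    by_cases hpb : p = σ a
    · subst hpb
      have n1 : ¬ IsCrossing σ (σ a) q := by
        rintro ⟨k1, k2, k3⟩; rw [hinv] at k2
        exact absurd (lt_trans (lt_trans h1' h2') (lt_trans k1 k2)) (lt_irrefl _)
      have n2 : ¬ IsCrossing τ (σ a) q := by
        rintro ⟨k1, k2, k3⟩; rw [tb] at k2
        exact absurd (lt_trans h2' (lt_trans k1 k2)) (lt_irrefl _)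
      simp [n1, n2]
    by_cases hpd : p = σ c
    · subst hpd
      have n1 : ¬ IsCrossing σ (σ c) q := by
        rintro ⟨k1, k2, k3⟩; rw [hinv] at k2
        exact absurd (lt_trans (lt_trans h2' h3') (lt_trans k1 k2)) (lt_irrefl _)
      have n2 : ¬ IsCrossing τ (σ c) q := by
        rintro ⟨k1, k2, k3⟩; rw [td] at k2
        exact absurd (lt_trans (lt_trans h1' (lt_trans h2' h3')) (lt_trans k1 k2)) (lt_irrefl _)
      simp [n1, n2]
    by_cases hqb : q = σ a
    · subst hqb
      have n1 : ¬ IsCrossing σ p (σ a) := by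
        rintro ⟨k1, k2, k3⟩; rw [hinv] at k3
        exact absurd (lt_trans (lt_trans h1' h2') (lt_trans k2 k3)) (lt_irrefl _)
      have n2 : ¬ IsCrossing τ p (σ a) := by
        rintro ⟨k1, k2, k3⟩; rw [tb] at k3
        exact absurd (lt_trans h2' (lt_trans k2 k3)) (lt_irrefl _)
      simp [n1, n2]
    by_cases hqd : q = σ c
    · subst hqd
      have n1 : ¬ IsCrossing σ p (σ c) := by
        rintro ⟨k1, k2, k3⟩; rw [hinv] at k3
        exact absurd (lt_trans (lt_trans h2' h3') (lt_trans k2 k3)) (lt_irrefl _)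
      have n2 : ¬ IsCrossing τ p (σ c) := by
        rintro ⟨k1, k2, k3⟩; rw [td] at k3
        exact absurd (lt_trans (lt_trans h1' (lt_trans h2' h3')) (lt_trans k2 k3)) (lt_irrefl _)
      simp [n1, n2]
    have e1 : τ p = σ p := tau_other hinv hcr hpa hpb hpc hpd
    have e2 : τ q = σ q := tau_other hinv hcr hqa hqb hqc hqd
    simp [IsCrossing, e1, e2]
  · -- h1
    intro q
    have hab : a ≠ σ a := ne_of_lt (lt_trans hcr.1 hcr.2.1)
    have had : a ≠ σ c := ne_of_lt (lt_trans (lt_trans hcr.1 hcr.2.1) hcr.2.2)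
    have hcb' : c ≠ σ a := ne_of_lt hcr.2.1
    have hcd : c ≠ σ c := ne_of_lt (lt_trans hcr.2.1 hcr.2.2)
    by_cases hqa : q = a
    · rw [hqa]
      simp only [IsCrossing, ta, tb, tc, td]
      simp only [Fin.lt_def, Fin.ext_iff]
      have d1 : (a : ℕ) ≠ (c : ℕ) := fun h => (ne_of_lt hcr.1) (Fin.ext h)
      simp only [lt_self_iff_false, false_and, and_false, if_false, eq_self_iff_true, if_true]
      split_ifs <;> omega
    by_cases hqc : q = c
    · rw [hqc]
      simp only [IsCrossing, ta, tb, tc, td]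
      simp only [Fin.lt_def, Fin.ext_iff]
      simp only [lt_self_iff_false, false_and, and_false, if_false, eq_self_iff_true, if_true]
      split_ifs <;> omega
    by_cases hqb : q = σ a
    · rw [hqb]
      simp only [IsCrossing, ta, tb, tc, td, hinv]
      simp only [Fin.lt_def, Fin.ext_iff]
      simp only [lt_self_iff_false, false_and, and_false, if_false, eq_self_iff_true, if_true]
      split_ifs <;> omega
    by_cases hqd : q = σ c
    · rw [hqd]
      simp only [IsCrossing, ta, tb, tc, td, hinv]
      simp only [Fin.lt_def, Fin.ext_iff]
      simp only [lt_self_iff_false, false_and, and_false, if_false, eq_self_iff_true, if_true]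
      split_ifs <;> omega
    · have e2 : τ q = σ q := tau_other hinv hcr hqa hqb hqc hqd
      have v1 : (q : ℕ) ≠ a := fun h => hqa (Fin.ext h)
      have v2 : (q : ℕ) ≠ c := fun h => hqc (Fin.ext h)
      have v3 : (q : ℕ) ≠ ((σ a : Fin (2*n)) : ℕ) := fun h => hqb (Fin.ext h)
      have v4 : (q : ℕ) ≠ ((σ c : Fin (2*n)) : ℕ) := fun h => hqd (Fin.ext h)
      have w1 : ((σ q : Fin (2*n)) : ℕ) ≠ a := fun h => hqb (by rw [← hinv q, Fin.ext h])
      have w2 : ((σ q : Fin (2*n)) : ℕ) ≠ c := fun h => hqd (by rw [← hinv q, Fin.ext h])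
      have w3 : ((σ q : Fin (2*n)) : ℕ) ≠ ((σ a : Fin (2*n)) : ℕ) :=
        fun h => hqa (σ.injective (Fin.ext h))
      have w4 : ((σ q : Fin (2*n)) : ℕ) ≠ ((σ c : Fin (2*n)) : ℕ) :=
        fun h => hqc (σ.injective (Fin.ext h))
      simp only [IsCrossing, ta, tb, tc, td, e2]
      simp only [Fin.lt_def, Fin.ext_iff]
      split_ifs <;> omega
  · -- h2
    have n1 : ¬ IsCrossing σ a a := fun h => absurd h.1 (lt_irrefl _)
    have n2 : ¬ IsCrossing σ c a := fun h => absurd (lt_trans hcr.1 h.1) (lt_irrefl _)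
    have n3 : ¬ IsCrossing σ c c := fun h => absurd h.1 (lt_irrefl _)
    simp [n1, n2, n3, hcr]
  · -- h3
    have n1 : ¬ IsCrossing τ a a := fun h => absurd h.1 (lt_irrefl _)
    have n2 : ¬ IsCrossing τ c a := fun h => absurd (lt_trans hcr.1 h.1) (lt_irrefl _)
    have n3 : ¬ IsCrossing τ c c := fun h => absurd h.1 (lt_irrefl _)
    have n4 : ¬ IsCrossing τ a c := by
      rintro ⟨k1, k2, k3⟩; rw [ta, tc] at k3
      exact absurd (lt_trans h3' k3) (lt_irrefl _)
    simp [n1, n2, n3, n4]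

lemma diff_filter :
    (univ.filter (fun z => σ z ≠ nestU σ a c z)) = ({a, c, σ a, σ c} : Finset (Fin (2*n))) := by
  have ta := tau_a hinv hcr
  have tb := tau_b hinv hcr
  have tc := tau_c hinv hcr
  have td := tau_d hinv hcr
  ext z
  simp only [Finset.mem_filter, Finset.mem_univ, true_and, Finset.mem_insert,
    Finset.mem_singleton]
  constructor
  · intro h
    by_contra hno
    push_neg at hno
    exact h (tau_other hinv hcr hno.1 hno.2.2.1 hno.2.1 hno.2.2.2).symm
  · rintro (rfl | rfl | rfl | rfl)
    · rw [ta]; exact ne_of_lt hcr.2.2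
    · rw [tc]; exact ne_of_gt hcr.2.2
    · rw [tb, hinv]; exact ne_of_lt hcr.1
    · rw [td, hinv]; exact ne_of_gt hcr.1

lemma diffList_eq : diffList σ (nestU σ a c) = [a, c, σ a, σ c] := by
  have h1 : a < c := hcr.1
  have h2 : c < σ a := hcr.2.1
  have h3 : σ a < σ c := hcr.2.2
  rw [diffList, diff_filter hinv hcr]
  have e1 : ∀ b ∈ ({c, σ a, σ c} : Finset (Fin (2*n))), a ≤ b := by
    intro b hb
    simp only [Finset.mem_insert, Finset.mem_singleton] at hb
    rcases hb with rfl | rfl | rfl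
    · exact le_of_lt h1
    · exact le_of_lt (lt_trans h1 h2)
    · exact le_of_lt (lt_trans (lt_trans h1 h2) h3)
  have e1' : a ∉ ({c, σ a, σ c} : Finset (Fin (2*n))) := by
    simp only [Finset.mem_insert, Finset.mem_singleton]
    push_neg
    exact ⟨ne_of_lt h1, ne_of_lt (lt_trans h1 h2), ne_of_lt (lt_trans (lt_trans h1 h2) h3)⟩
  have e2 : ∀ b ∈ ({σ a, σ c} : Finset (Fin (2*n))), c ≤ b := by
    intro b hb
    simp only [Finset.mem_insert, Finset.mem_singleton] at hb
    rcases hb with rfl | rfl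
    · exact le_of_lt h2
    · exact le_of_lt (lt_trans h2 h3)
  have e2' : c ∉ ({σ a, σ c} : Finset (Fin (2*n))) := by
    simp only [Finset.mem_insert, Finset.mem_singleton]
    push_neg
    exact ⟨ne_of_lt h2, ne_of_lt (lt_trans h2 h3)⟩
  have e3 : ∀ b ∈ ({σ c} : Finset (Fin (2*n))), σ a ≤ b := by
    intro b hb
    simp only [Finset.mem_singleton] at hb
    subst hb
    exact le_of_lt h3
  have e3' : σ a ∉ ({σ c} : Finset (Fin (2*n))) := by
    simp only [Finset.mem_singleton]
    exact ne_of_lt h3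
  rw [Finset.sort_insert _ e1 e1', Finset.sort_insert _ e2 e2', Finset.sort_insert _ e3 e3',
    Finset.sort_singleton]


end NestCtx

end Main



section WDfacts

variable {n : ℕ}

lemma word_eq_rank (ρ : WDperm n) (z : Fin (2*n)) :
    word ρ z = ((startSet ρ).filter (fun s => s < min z (ρ z))).card := by
  rw [word, startSet]
  congr 1
  ext x
  simp only [Finset.mem_filter, Finset.mem_univ, true_and]

lemma rank_lt_rank {S : Finset (Fin (2*n))} {s1 s2 : Fin (2*n)} (h1 : s1 ∈ S) (h : s1 < s2) :
    (S.filter (fun s => s < s1)).card < (S.filter (fun s => s < s2)).card := by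
  apply Finset.card_lt_card
  constructor
  · exact Finset.monotone_filter_right S (fun z _ hz => lt_trans hz h)
  · intro hsub
    have : s1 ∈ S.filter (fun s => s < s2) := Finset.mem_filter.2 ⟨h1, h⟩
    have := hsub this
    exact absurd (Finset.mem_filter.1 this).2 (lt_irrefl _)

lemma rank_lt_rank_iff {S : Finset (Fin (2*n))} {s1 s2 : Fin (2*n)}
    (h1 : s1 ∈ S) (h2 : s2 ∈ S) :
    (S.filter (fun s => s < s1)).card < (S.filter (fun s => s < s2)).card ↔ s1 < s2 := by
  constructor
  · intro h
    by_contra hle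
    rcases eq_or_lt_of_le (not_lt.1 hle) with he | hlt
    · rw [he] at h; exact absurd h (lt_irrefl _)
    · exact absurd (lt_trans h (rank_lt_rank h2 hlt)) (lt_irrefl _)
  · exact rank_lt_rank h1

lemma rank_injOn {S : Finset (Fin (2*n))} {s1 s2 : Fin (2*n)}
    (h1 : s1 ∈ S) (h2 : s2 ∈ S)
    (h : (S.filter (fun s => s < s1)).card = (S.filter (fun s => s < s2)).card) : s1 = s2 := by
  rcases lt_trichotomy s1 s2 with hl | he | hl
  · exact absurd ((rank_lt_rank_iff h1 h2).2 hl) (by omega)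
  · exact he
  · exact absurd ((rank_lt_rank_iff h2 h1).2 hl) (by omega)

variable {ρ : WDperm n} (hinv : ∀ z, ρ (ρ z) = z) (hffp : ∀ z, ρ z ≠ z)

include hinv hffp

lemma secondEnds_eq_image : secondEnds ρ = (startSet ρ).image ρ := by
  ext t
  simp only [secondEnds, startSet, Finset.mem_filter, Finset.mem_univ, true_and,
    Finset.mem_image]
  constructor
  · intro h
    exact ⟨ρ t, by rw [hinv]; exact ⟨h, rfl⟩⟩
  · rintro ⟨s, hs, rfl⟩
    rwa [hinv]

lemma startSet_union : startSet ρ ∪ secondEnds ρ = Finset.univ := by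
  ext z
  simp only [startSet, secondEnds, Finset.mem_union, Finset.mem_filter, Finset.mem_univ,
    true_and, iff_true]
  exact lt_or_gt_of_ne (hffp z).symm

lemma startSet_disj : Disjoint (startSet ρ) (secondEnds ρ) := by
  rw [Finset.disjoint_left]
  intro z hz hz'
  simp only [startSet, secondEnds, Finset.mem_filter, Finset.mem_univ, true_and] at hz hz'
  exact absurd (lt_trans hz hz') (lt_irrefl _)

lemma card_startSet : (startSet ρ).card = n := by
  have h1 : (startSet ρ ∪ secondEnds ρ).card = 2 * n := by
    rw [startSet_union hinv hffp, Finset.card_univ, Fintype.card_fin]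
  rw [Finset.card_union_of_disjoint (startSet_disj hinv hffp)] at h1
  have h2 : (secondEnds ρ).card = (startSet ρ).card := by
    rw [secondEnds_eq_image hinv hffp, Finset.card_image_of_injective _ ρ.injective]
  omega

lemma card_secondEnds : (secondEnds ρ).card = n := by
  have h2 : (secondEnds ρ).card = (startSet ρ).card := by
    rw [secondEnds_eq_image hinv hffp, Finset.card_image_of_injective _ ρ.injective]
  rw [h2, card_startSet hinv hffp]

lemma min_mem_startSet (z : Fin (2*n)) : min z (ρ z) ∈ startSet ρ := by
  rcases lt_or_gt_of_ne (hffp z).symm with h | h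
  · rw [min_eq_left (le_of_lt h)]
    simpa [startSet] using h
  · rw [min_eq_right (le_of_lt h)]
    simp only [startSet, Finset.mem_filter, Finset.mem_univ, true_and]
    rw [hinv]; exact h

lemma word_lt (z : Fin (2*n)) : word ρ z < n := by
  rw [word_eq_rank]
  have hm := min_mem_startSet hinv hffp z
  have hsub : (startSet ρ).filter (fun s => s < min z (ρ z)) ⊆ (startSet ρ).erase (min z (ρ z)) := by
    intro x hx
    rcases Finset.mem_filter.1 hx with ⟨hx1, hx2⟩
    exact Finset.mem_erase.2 ⟨ne_of_lt hx2, hx1⟩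
  have := Finset.card_le_card hsub
  have hcard := Finset.card_erase_of_mem hm
  have hS := card_startSet hinv hffp
  have hpos : 0 < (startSet ρ).card := Finset.card_pos.2 ⟨_, hm⟩
  omega

lemma word_secondEnd {z : Fin (2*n)} (hz : z ∈ secondEnds ρ) :
    word ρ z = ((startSet ρ).filter (fun s => s < ρ z)).card := by
  simp only [secondEnds, Finset.mem_filter, Finset.mem_univ, true_and] at hz
  rw [word_eq_rank, min_eq_right (le_of_lt hz)]

lemma word_firstEnd {z : Fin (2*n)} (hz : z ∈ startSet ρ) :
    word ρ z = ((startSet ρ).filter (fun s => s < z)).card := by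
  simp only [startSet, Finset.mem_filter, Finset.mem_univ, true_and] at hz
  rw [word_eq_rank, min_eq_left (le_of_lt hz)]

lemma mem_secondEnds_iff (z : Fin (2*n)) : z ∈ secondEnds ρ ↔ z ∉ startSet ρ := by
  simp only [secondEnds, startSet, Finset.mem_filter, Finset.mem_univ, true_and]
  constructor
  · intro h h'
    exact absurd (lt_trans h' h) (lt_irrefl _)
  · intro h
    rcases lt_or_gt_of_ne (hffp z) with h' | h'
    · exact h'
    · exact absurd h' h


lemma piVal_eq (t : Fin n) :
    piVal ρ (t : ℕ)
      = word ρ ((secondEnds ρ).orderEmbOfFin (card_secondEnds hinv hffp) t) := by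
  rw [piVal, Finset.orderEmbOfFin_apply]
  have hlen : ((secondEnds ρ).sort (· ≤ ·)).length = n := by
    rw [Finset.length_sort, card_secondEnds hinv hffp]
  rw [List.getElem?_eq_getElem (by rw [hlen]; exact t.2)]
  rfl

lemma piVal_injective (t1 t2 : Fin n) (h : piVal ρ (t1 : ℕ) = piVal ρ (t2 : ℕ)) : t1 = t2 := by
  rw [piVal_eq hinv hffp, piVal_eq hinv hffp] at h
  set E := (secondEnds ρ).orderEmbOfFin (card_secondEnds hinv hffp) with hE
  have hmem : ∀ t : Fin n, E t ∈ secondEnds ρ := fun t => Finset.orderEmbOfFin_mem _ _ t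
  have hw : ∀ t : Fin n, word ρ (E t) = ((startSet ρ).filter (fun s => s < ρ (E t))).card :=
    fun t => word_secondEnd hinv hffp (hmem t)
  rw [hw, hw] at h
  have hsmem : ∀ t : Fin n, ρ (E t) ∈ startSet ρ := by
    intro t
    have := hmem t
    simp only [secondEnds, Finset.mem_filter, Finset.mem_univ, true_and] at this
    simp only [startSet, Finset.mem_filter, Finset.mem_univ, true_and]
    rw [hinv]; exact this
  have := rank_injOn (hsmem t1) (hsmem t2) h
  have := ρ.injective this
  exact (Finset.orderEmbOfFin (secondEnds ρ) (card_secondEnds hinv hffp)).injective this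

lemma piPerm_coe (t : Fin n) :
    (piPerm ρ t : ℕ)
      = word ρ ((secondEnds ρ).orderEmbOfFin (card_secondEnds hinv hffp) t) := by
  have hval : ∀ t : Fin n, piVal ρ (t : ℕ) < n := by
    intro t
    rw [piVal_eq hinv hffp]
    exact word_lt hinv hffp _
  have hFeq : (fun t : Fin n =>
      if ht : piVal ρ (t : ℕ) < n then (⟨piVal ρ (t : ℕ), ht⟩ : Fin n) else t)
      = fun t : Fin n => (⟨piVal ρ (t : ℕ), hval t⟩ : Fin n) := by
    funext t; rw [dif_pos (hval t)]
  have hbij : Function.Bijective (fun t : Fin n =>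
      if ht : piVal ρ (t : ℕ) < n then (⟨piVal ρ (t : ℕ), ht⟩ : Fin n) else t) := by
    rw [hFeq]
    refine Finite.injective_iff_bijective.1 ?_
    intro t1 t2 h
    exact piVal_injective hinv hffp t1 t2 (by simpa [Fin.ext_iff] using h)
  rw [piPerm, dif_pos hbij]
  rw [Equiv.ofBijective_apply, dif_pos (hval t)]
  exact piVal_eq hinv hffp t

end WDfacts



lemma numInv_sum {m : ℕ} (ρ : Equiv.Perm (Fin m)) :
    numInv ρ = ∑ p, ∑ q, if (p < q ∧ ρ q < ρ p) then 1 else 0 := by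
  rw [numInv, Finset.card_filter]
  exact Fintype.sum_prod_type _


set_option maxHeartbeats 8000000

/-- For a start-set-preserving cover `x ⋖ y` in `P_n^*` with label `(i, j)`, `i < j` (a nesting
uncrossing of wires `i` and `j` of `x`), we have `π(y) = (i j) ∘ π(x)` and
`inv(π(y)) = inv(π(x)) + 1`. -/
theorem nesting_cover_bruhat_step (n : ℕ) (hn : 2 ≤ n) (x y : {σ : WDperm n // IsWD σ})
    (hcov : Cov (some x) (some y)) (hS : startSet x.1 = startSet y.1)
    (i j : Fin n) (hij : i < j)
    (hlbl : lbl (some x) (some y) = Lbl.pair (i : ℕ) (j : ℕ)) :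
    piPerm y.1 = Equiv.swap i j * piPerm x.1 ∧
      numInv (piPerm y.1) = numInv (piPerm x.1) + 1 := by
  obtain ⟨hstep, hnc⟩ := hcov
  obtain ⟨hinvx, hffpx⟩ := x.2
  obtain ⟨hinvy, hffpy⟩ := y.2
  -- rule out the disjoint uncrossing using `hS`
  have hnest : IsNestStep x.1 y.1 := by
    rcases hstep with h | h
    · exact h
    · exfalso
      obtain ⟨a, c, hcr, hy⟩ := h
      have hne1 : a ≠ x.1 a := ne_of_lt (lt_trans hcr.1 hcr.2.1)
      have hne2 : a ≠ c := ne_of_lt hcr.1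
      have hval : y.1 c = a := by
        rw [hy]
        show (Equiv.swap (x.1 a) c) (x.1 ((Equiv.swap (x.1 a) c) c)) = a
        rw [Equiv.swap_apply_right, hinvx, Equiv.swap_apply_of_ne_of_ne hne1 hne2]
      have hc1 : c ∈ startSet x.1 := by
        simp only [startSet, Finset.mem_filter, Finset.mem_univ, true_and]
        exact lt_trans hcr.2.1 hcr.2.2
      have hc2 : c ∈ startSet y.1 := hS ▸ hc1
      simp only [startSet, Finset.mem_filter, Finset.mem_univ, true_and] at hc2
      rw [hval] at hc2
      exact absurd (lt_trans hcr.1 hc2) (lt_irrefl _)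
  obtain ⟨a, c, hcr, hy⟩ := hnest
  have h1 : a < c := hcr.1
  have h2 : c < x.1 a := hcr.2.1
  have h3 : x.1 a < x.1 c := hcr.2.2
  -- the label is (rank a, rank c)
  have hdl : diffList x.1 y.1 = [a, c, x.1 a, x.1 c] := by
    rw [hy]; exact NestCtx.diffList_eq hinvx hcr
  have hyac : y.1 a = x.1 c := by rw [hy]; exact NestCtx.tau_a hinvx hcr
  have hybc : y.1 (x.1 a) = c := by rw [hy]; exact NestCtx.tau_b hinvx hcr
  have hycb : y.1 c = x.1 a := by rw [hy]; exact NestCtx.tau_c hinvx hcr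
  have hyda : y.1 (x.1 c) = a := by rw [hy]; exact NestCtx.tau_d hinvx hcr
  have hlbl2 : lbl (some x) (some y) = Lbl.pair (word x.1 a) (word x.1 c) := by
    simp only [lbl, hdl, List.getElem?_cons_zero, List.getElem?_cons_succ, hyac, if_pos rfl, if_true]
  rw [hlbl2] at hlbl
  have hKi : word x.1 a = (i : ℕ) := by injection hlbl
  have hMj : word x.1 c = (j : ℕ) := by injection hlbl
  -- start sets and second ends
  have hmem_a : a ∈ startSet x.1 := by
    simp only [startSet, Finset.mem_filter, Finset.mem_univ, true_and]
    exact lt_trans h1 h2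
  have hmem_c : c ∈ startSet x.1 := by
    simp only [startSet, Finset.mem_filter, Finset.mem_univ, true_and]
    exact lt_trans h2 h3
  have hsec : secondEnds y.1 = secondEnds x.1 := by
    ext z
    rw [mem_secondEnds_iff hinvy hffpy, mem_secondEnds_iff hinvx hffpx, hS]
  have hbmem : x.1 a ∈ secondEnds x.1 := by
    simp only [secondEnds, Finset.mem_filter, Finset.mem_univ, true_and]
    rw [hinvx]; exact lt_trans h1 h2
  have hdmem : x.1 c ∈ secondEnds x.1 := by
    simp only [secondEnds, Finset.mem_filter, Finset.mem_univ, true_and]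
    rw [hinvx]; exact lt_trans h2 h3
  set E := (secondEnds x.1).orderEmbOfFin (card_secondEnds hinvx hffpx) with hEdef
  have hEE : ∀ t, (secondEnds y.1).orderEmbOfFin (card_secondEnds hinvy hffpy) t = E t := by
    have hu := Finset.orderEmbOfFin_unique (card_secondEnds hinvy hffpy)
      (f := fun t => E t) (fun t => by rw [hsec]; exact Finset.orderEmbOfFin_mem _ _ t)
      E.strictMono
    intro t
    exact (congrFun hu t).symm
  -- word values
  have hw_b : word x.1 (x.1 a) = ((startSet x.1).filter (fun s => s < a)).card := by
    rw [word_secondEnd hinvx hffpx hbmem, hinvx]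
  have hw_d : word x.1 (x.1 c) = ((startSet x.1).filter (fun s => s < c)).card := by
    rw [word_secondEnd hinvx hffpx hdmem, hinvx]
  have hwa : word x.1 a = ((startSet x.1).filter (fun s => s < a)).card :=
    word_firstEnd hinvx hffpx hmem_a
  have hwc : word x.1 c = ((startSet x.1).filter (fun s => s < c)).card :=
    word_firstEnd hinvx hffpx hmem_c
  have hwτ_b : word y.1 (x.1 a) = ((startSet x.1).filter (fun s => s < c)).card := by
    rw [word_secondEnd hinvy hffpy (by rw [hsec]; exact hbmem), hybc, ← hS]
  have hwτ_d : word y.1 (x.1 c) = ((startSet x.1).filter (fun s => s < a)).card := by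
    rw [word_secondEnd hinvy hffpy (by rw [hsec]; exact hdmem), hyda, ← hS]
  have hwτ_gen : ∀ z ∈ secondEnds x.1, z ≠ x.1 a → z ≠ x.1 c → word y.1 z = word x.1 z := by
    intro z hz hz1 hz2
    have hza : z ≠ a := by
      intro h; rw [h] at hz
      exact (mem_secondEnds_iff hinvx hffpx a).1 hz hmem_a
    have hzc : z ≠ c := by
      intro h; rw [h] at hz
      exact (mem_secondEnds_iff hinvx hffpx c).1 hz hmem_c
    have hyz : y.1 z = x.1 z := by rw [hy]; exact NestCtx.tau_other hinvx hcr hza hz1 hzc hz2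
    rw [word_secondEnd hinvy hffpy (by rw [hsec]; exact hz), hyz, ← hS,
      word_secondEnd hinvx hffpx hz]
  -- permutation values
  have hπσ : ∀ t, (piPerm x.1 t : ℕ) = word x.1 (E t) := piPerm_coe hinvx hffpx
  have hπτ : ∀ t, (piPerm y.1 t : ℕ) = word y.1 (E t) := by
    intro t
    rw [piPerm_coe hinvy hffpy t, hEE t]
  -- indices of the two moved second endpoints
  obtain ⟨p, hp⟩ : ∃ p, E p = x.1 a := by
    have : x.1 a ∈ Set.range E := by
      rw [Finset.range_orderEmbOfFin]; exact Finset.mem_coe.2 hbmem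
    exact this
  obtain ⟨q, hq⟩ : ∃ q, E q = x.1 c := by
    have : x.1 c ∈ Set.range E := by
      rw [Finset.range_orderEmbOfFin]; exact Finset.mem_coe.2 hdmem
    exact this
  have hpq : p < q := by
    have := E.lt_iff_lt (a := p) (b := q)
    rw [hp, hq] at this
    exact this.1 h3
  have hπp : piPerm x.1 p = i := by
    apply Fin.ext; rw [hπσ, hp, hw_b, ← hKi, hwa]
  have hπq : piPerm x.1 q = j := by
    apply Fin.ext; rw [hπσ, hq, hw_d, ← hMj, hwc]
  -- membership facts for ranks
  have hstart : ∀ t : Fin n, x.1 (E t) ∈ startSet x.1 := by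
    intro t
    have := Finset.orderEmbOfFin_mem (secondEnds x.1) (card_secondEnds hinvx hffpx) t
    simp only [secondEnds, Finset.mem_filter, Finset.mem_univ, true_and] at this
    simp only [startSet, Finset.mem_filter, Finset.mem_univ, true_and]
    rw [hinvx]; exact this
  have hwordE : ∀ t : Fin n,
      word x.1 (E t) = ((startSet x.1).filter (fun s => s < x.1 (E t))).card := by
    intro t
    exact word_secondEnd hinvx hffpx (Finset.orderEmbOfFin_mem _ _ t)
  -- Claim 1 : piPerm y = swap i j * piPerm x
  have claim1 : piPerm y.1 = Equiv.swap i j * piPerm x.1 := by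
    apply Equiv.ext
    intro t
    rw [Equiv.Perm.mul_apply]
    by_cases hEb : E t = x.1 a
    · have htp : t = p := E.injective (by rw [hEb, hp])
      rw [htp, hπp, Equiv.swap_apply_left]
      apply Fin.ext
      rw [hπτ, hp, hwτ_b, ← hwc, hMj]
    by_cases hEd : E t = x.1 c
    · have htq : t = q := E.injective (by rw [hEd, hq])
      rw [htq, hπq, Equiv.swap_apply_right]
      apply Fin.ext
      rw [hπτ, hq, hwτ_d, ← hwa, hKi]
    · have hEsec : E t ∈ secondEnds x.1 := Finset.orderEmbOfFin_mem _ _ t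
      have hwz : word y.1 (E t) = word x.1 (E t) := hwτ_gen _ hEsec hEb hEd
      have hne_i : piPerm x.1 t ≠ i := by
        intro h
        have hv : ((startSet x.1).filter (fun s => s < x.1 (E t))).card
            = ((startSet x.1).filter (fun s => s < a)).card := by
          rw [← hwordE t, ← hπσ t, h, ← hKi, hwa]
        have hza := rank_injOn (hstart t) hmem_a hv
        exact hEb (by rw [← hza, hinvx])
      have hne_j : piPerm x.1 t ≠ j := by
        intro h
        have hv : ((startSet x.1).filter (fun s => s < x.1 (E t))).card
            = ((startSet x.1).filter (fun s => s < c)).card := by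
          rw [← hwordE t, ← hπσ t, h, ← hMj, hwc]
        have hzc := rank_injOn (hstart t) hmem_c hv
        exact hEd (by rw [← hzc, hinvx])
      rw [Equiv.swap_apply_of_ne_of_ne hne_i hne_j]
      apply Fin.ext
      rw [hπτ, hπσ, hwz]
  -- values of the swapped permutation
  have hπ'p : (Equiv.swap i j * piPerm x.1) p = j := by
    rw [Equiv.Perm.mul_apply, hπp, Equiv.swap_apply_left]
  have hπ'q : (Equiv.swap i j * piPerm x.1) q = i := by
    rw [Equiv.Perm.mul_apply, hπq, Equiv.swap_apply_right]
  have hπ't : ∀ t : Fin n, t ≠ p → t ≠ q →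
      (Equiv.swap i j * piPerm x.1) t = piPerm x.1 t := by
    intro t htp htq
    rw [Equiv.Perm.mul_apply]
    apply Equiv.swap_apply_of_ne_of_ne
    · exact fun h => htp ((piPerm x.1).injective (h.trans hπp.symm))
    · exact fun h => htq ((piPerm x.1).injective (h.trans hπq.symm))
  -- there is no wire strictly in between (crossing-count condition)
  have hBpos : ((univ.filter
      (fun z : Fin (2*n) => a < z ∧ z < c ∧ x.1 a < x.1 z ∧ x.1 z < x.1 c)).card) = 0 := by
    have hnceq := NestCtx.ncross_eq hinvx hcr
    rw [← hy] at hnceq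
    omega
  have hbadall : ∀ t : Fin n,
      ¬ (p < t ∧ t < q ∧ i < piPerm x.1 t ∧ piPerm x.1 t < j) := by
    rintro t ⟨k1, k2, k3, k4⟩
    have hz : x.1 (E t) ∈ startSet x.1 := hstart t
    have hlt1 : a < x.1 (E t) := by
      apply (rank_lt_rank_iff hmem_a hz).1
      rw [← hwa, hKi, ← hwordE t, ← hπσ t]
      exact k3
    have hlt2 : x.1 (E t) < c := by
      apply (rank_lt_rank_iff hz hmem_c).1
      rw [← hwordE t, ← hπσ t, ← hwc, hMj]
      exact k4
    have hlt3 : x.1 a < E t := by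
      have := (E.lt_iff_lt (a := p) (b := t)).2 k1
      rwa [hp] at this
    have hlt4 : E t < x.1 c := by
      have := (E.lt_iff_lt (a := t) (b := q)).2 k2
      rwa [hq] at this
    have hmemf : x.1 (E t) ∈ univ.filter
        (fun z : Fin (2*n) => a < z ∧ z < c ∧ x.1 a < x.1 z ∧ x.1 z < x.1 c) := by
      simp only [Finset.mem_filter, Finset.mem_univ, true_and]
      refine ⟨hlt1, hlt2, ?_, ?_⟩ <;> rw [hinvx] <;> assumption
    rw [Finset.card_eq_zero] at hBpos
    rw [hBpos] at hmemf
    exact absurd hmemf (Finset.notMem_empty _)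
  have hijv : (i : ℕ) < (j : ℕ) := hij
  have hpqv : (p : ℕ) < (q : ℕ) := hpq
  have key' : (∑ s : Fin n, ∑ t : Fin n, if (s < t ∧
        (Equiv.swap i j * piPerm x.1) t < (Equiv.swap i j * piPerm x.1) s) then 1 else 0)
      = (∑ s : Fin n, ∑ t : Fin n, if (s < t ∧ piPerm x.1 t < piPerm x.1 s) then 1 else 0)
        + 1 + 2 * ∑ t : Fin n,
          (if (p < t ∧ t < q ∧ i < piPerm x.1 t ∧ piPerm x.1 t < j) then 1 else 0) := by
    refine sumIE p q (ne_of_lt hpq) _ _ _ ?_ ?_ ?_ ?_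
    · intro s t hsp hsq htp htq
      rw [hπ't s hsp hsq, hπ't t htp htq]
    · intro t
      by_cases htp : t = p
      · rw [htp, hπ'p, hπp]
        simp only [Fin.lt_def, Fin.ext_iff]
        split_ifs <;> omega
      by_cases htq : t = q
      · rw [htq, hπ'q, hπ'p, hπq, hπp]
        simp only [Fin.lt_def, Fin.ext_iff]
        split_ifs <;> omega
      · have e1 : piPerm x.1 t ≠ i := fun h => htp ((piPerm x.1).injective (h.trans hπp.symm))
        have e2 : piPerm x.1 t ≠ j := fun h => htq ((piPerm x.1).injective (h.trans hπq.symm))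
        have e1v : ((piPerm x.1 t : Fin n) : ℕ) ≠ (i : ℕ) := fun hv => e1 (Fin.ext hv)
        have e2v : ((piPerm x.1 t : Fin n) : ℕ) ≠ (j : ℕ) := fun hv => e2 (Fin.ext hv)
        have e3v : (t : ℕ) ≠ (p : ℕ) := fun hv => htp (Fin.ext hv)
        have e4v : (t : ℕ) ≠ (q : ℕ) := fun hv => htq (Fin.ext hv)
        rw [hπ't t htp htq, hπ'p, hπ'q, hπp, hπq]
        simp only [Fin.lt_def, Fin.ext_iff]
        split_ifs <;> omega
    · rw [hπ'p, hπ'q]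
      simp only [Fin.lt_def, Fin.ext_iff]
      split_ifs <;> omega
    · rw [hπp, hπq]
      simp only [Fin.lt_def, Fin.ext_iff]
      split_ifs <;> omega
  have hsum0 : (∑ t : Fin n,
      (if (p < t ∧ t < q ∧ i < piPerm x.1 t ∧ piPerm x.1 t < j) then 1 else 0) : ℕ) = 0 :=
    Finset.sum_eq_zero fun t _ => if_neg (hbadall t)
  refine ⟨claim1, ?_⟩
  rw [claim1, numInv_sum, numInv_sum, key', hsum0]
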